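/- arXiv:2006.05807 — 2 statements merged into one kernel-verified Lean document; each statement's English description precedes it below -/
import Mathlib

section
/- Let I ⊂ ℝ^d be a dyadic cube of side length ℓ(I), let k ≥ 2 and let K = I^{(k)} be its k-th dyadic ancestor (so K ⊇ I and ℓ(K) = 2^k ℓ(I)). Assume the goodness condition dist(I, ∂K) ≥ 2^{k-2} ℓ(I). Then for every m ∈ ℤ^d with |m| ≤ 2^{k-2} (Euclidean norm), the translated cube I + m ℓ(I) is contained in K; in particular (I + m ℓ(I))^{(k)} = K. -/
lemma dist_update_aux {d : ℕ} (y : EuclideanSpace ℝ (Fin d)) (i : Fin d) (v : ℝ) :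
    dist y (WithLp.toLp 2 (Function.update y i v)) = |y i - v| := by
  rw [EuclideanSpace.dist_eq, Finset.sum_eq_single_of_mem i (Finset.mem_univ i)]
  · dsimp only; rw [Function.update_self, Real.dist_eq, Real.sqrt_sq_eq_abs, abs_abs]
  · intro j _ hj
    dsimp only; rw [Function.update_of_ne hj, dist_self]
    ring

lemma mem_frontier_box_low {d : ℕ} (b : EuclideanSpace ℝ (Fin d)) (L : ℝ) (hL : 0 < L)
    (z : EuclideanSpace ℝ (Fin d)) (hz : ∀ j, b j ≤ z j ∧ z j < b j + L) (i : Fin d) :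
    WithLp.toLp 2 (Function.update z i (b i)) ∈
      frontier {x : EuclideanSpace ℝ (Fin d) | ∀ j, b j ≤ x j ∧ x j < b j + L} := by
  rw [frontier_eq_closure_inter_closure]
  set y : EuclideanSpace ℝ (Fin d) := WithLp.toLp 2 (Function.update z i (b i)) with hy
  constructor
  · rw [Metric.mem_closure_iff]
    intro ε hε
    set δ := min (ε / 2) (L / 2) with hδ
    have hδ0 : 0 < δ := lt_min (by linarith) (by linarith)
    refine ⟨WithLp.toLp 2 (Function.update z i (b i + δ)), ?_, ?_⟩
    · intro j
      rcases eq_or_ne j i with rfl | hj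
      · simp only [WithLp.ofLp_toLp, Function.update_self]
        constructor
        · linarith
        · have : δ ≤ L / 2 := min_le_right _ _
          linarith
      · dsimp only; rw [Function.update_of_ne hj]; exact hz j
    · have : WithLp.toLp 2 (Function.update z i (b i + δ)) = WithLp.toLp 2 (Function.update y i (b i + δ)) := by
        simp [hy, Function.update_idem]
      rw [this, dist_update_aux]
      have h1 : y i = b i := Function.update_self i (b i) z
      rw [h1]
      have : |b i - (b i + δ)| = δ := by
        rw [abs_sub_comm]; simp [abs_of_pos hδ0]
      rw [this]
      calc δ ≤ ε / 2 := min_le_left _ _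
        _ < ε := by linarith
  · rw [Metric.mem_closure_iff]
    intro ε hε
    set δ := min (ε / 2) (L / 2) with hδ
    have hδ0 : 0 < δ := lt_min (by linarith) (by linarith)
    refine ⟨WithLp.toLp 2 (Function.update z i (b i - δ)), ?_, ?_⟩
    · intro h
      have := (h i).1
      dsimp only at this; rw [Function.update_self] at this
      linarith
    · have : WithLp.toLp 2 (Function.update z i (b i - δ)) = WithLp.toLp 2 (Function.update y i (b i - δ)) := by
        simp [hy, Function.update_idem]
      rw [this, dist_update_aux]
      have h1 : y i = b i := Function.update_self i (b i) z
      rw [h1]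
      have : |b i - (b i - δ)| = δ := by simp [abs_of_pos hδ0]
      rw [this]
      calc δ ≤ ε / 2 := min_le_left _ _
        _ < ε := by linarith

lemma mem_frontier_box_high {d : ℕ} (b : EuclideanSpace ℝ (Fin d)) (L : ℝ) (hL : 0 < L)
    (z : EuclideanSpace ℝ (Fin d)) (hz : ∀ j, b j ≤ z j ∧ z j < b j + L) (i : Fin d) :
    WithLp.toLp 2 (Function.update z i (b i + L)) ∈
      frontier {x : EuclideanSpace ℝ (Fin d) | ∀ j, b j ≤ x j ∧ x j < b j + L} := by
  rw [frontier_eq_closure_inter_closure]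
  set y : EuclideanSpace ℝ (Fin d) := WithLp.toLp 2 (Function.update z i (b i + L)) with hy
  constructor
  · rw [Metric.mem_closure_iff]
    intro ε hε
    set δ := min (ε / 2) (L / 2) with hδ
    have hδ0 : 0 < δ := lt_min (by linarith) (by linarith)
    refine ⟨WithLp.toLp 2 (Function.update z i (b i + L - δ)), ?_, ?_⟩
    · intro j
      rcases eq_or_ne j i with rfl | hj
      · simp only [WithLp.ofLp_toLp, Function.update_self]
        constructor
        · have : δ ≤ L / 2 := min_le_right _ _
          linarith
        · linarith
      · dsimp only; rw [Function.update_of_ne hj]; exact hz j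
    · have : WithLp.toLp 2 (Function.update z i (b i + L - δ)) = WithLp.toLp 2 (Function.update y i (b i + L - δ)) := by
        simp [hy, Function.update_idem]
      rw [this, dist_update_aux]
      have h1 : y i = b i + L := Function.update_self i (b i + L) z
      rw [h1]
      have : |b i + L - (b i + L - δ)| = δ := by simp [abs_of_pos hδ0]
      rw [this]
      calc δ ≤ ε / 2 := min_le_left _ _
        _ < ε := by linarith
  · apply subset_closure
    intro h
    have := (h i).2
    rw [hy] at this; dsimp only at this; rw [Function.update_self] at this
    linarith

/-- Let `I ⊂ ℝ^d` be a (dyadic) cube of side length `ℓ`, `k ≥ 2`, and let `K` be its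
`k`-th dyadic ancestor, so `I ⊆ K` and `ℓ(K) = 2^k ℓ`. Assume the goodness condition
`dist(I, ∂K) ≥ 2^{k-2} ℓ`. Then for every `m ∈ ℤ^d` with Euclidean norm `|m| ≤ 2^{k-2}`,
the translated cube `I + m ℓ` is contained in `K`. -/
theorem stmt2 (d k : ℕ) (hd : 1 ≤ d) (hk : 2 ≤ k) (ℓ : ℝ) (hℓ : 0 < ℓ)
    (a b : EuclideanSpace ℝ (Fin d))
    (I K : Set (EuclideanSpace ℝ (Fin d)))
    (hI : I = {x | ∀ i, a i ≤ x i ∧ x i < a i + ℓ})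
    (hK : K = {x | ∀ i, b i ≤ x i ∧ x i < b i + 2 ^ k * ℓ})
    (hIK : I ⊆ K)
    (hgood : ∀ x ∈ I, ∀ y ∈ frontier K, (2:ℝ) ^ k / 4 * ℓ ≤ dist x y)
    (m : Fin d → ℤ)
    (hm : Real.sqrt (∑ i, ((m i : ℝ)) ^ 2) ≤ (2:ℝ) ^ k / 4) :
    {x : EuclideanSpace ℝ (Fin d) |
        ∀ i, a i + (m i : ℝ) * ℓ ≤ x i ∧ x i < a i + (m i : ℝ) * ℓ + ℓ} ⊆ K := by
  have hL : (0:ℝ) < 2 ^ k * ℓ := by positivity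
  -- coordinate bound on m
  have hmi : ∀ i, |(m i : ℝ)| ≤ 2 ^ k / 4 := by
    intro i
    refine le_trans ?_ hm
    rw [← Real.sqrt_sq_eq_abs]
    exact Real.sqrt_le_sqrt (Finset.single_le_sum
      (f := fun j => ((m j : ℝ)) ^ 2) (fun j _ => sq_nonneg _) (Finset.mem_univ i))
  -- a ∈ I
  have haI : a ∈ I := by
    rw [hI]; intro i; exact ⟨le_refl _, by linarith⟩
  have haK : ∀ i, b i ≤ a i ∧ a i < b i + 2 ^ k * ℓ := by
    have := hIK haI; rw [hK] at this; exact this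
  -- lower bound: a i - b i ≥ 2^k/4 * ℓ
  have hlow : ∀ i, (2:ℝ) ^ k / 4 * ℓ ≤ a i - b i := by
    intro i
    have hfr := mem_frontier_box_low b (2 ^ k * ℓ) hL a haK i
    rw [← hK] at hfr
    have := hgood a haI _ hfr
    rw [dist_update_aux] at this
    rwa [abs_of_nonneg (by linarith [(haK i).1])] at this
  -- upper bound: b i + 2^k ℓ - (a i + ℓ) ≥ 2^k/4 * ℓ
  have hhigh : ∀ i, (2:ℝ) ^ k / 4 * ℓ ≤ b i + 2 ^ k * ℓ - (a i + ℓ) := by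
    intro i
    have key : ∀ ε : ℝ, 0 < ε → ε < ℓ →
        (2:ℝ) ^ k / 4 * ℓ ≤ b i + 2 ^ k * ℓ - (a i + ℓ - ε) := by
      intro ε hε hεℓ
      set x : EuclideanSpace ℝ (Fin d) := WithLp.toLp 2 (Function.update a i (a i + ℓ - ε)) with hx
      have hxI : x ∈ I := by
        rw [hI]; intro j
        rcases eq_or_ne j i with rfl | hj
        · rw [hx]; dsimp only; rw [Function.update_self]
          constructor <;> linarith
        · rw [hx]; dsimp only; rw [Function.update_of_ne hj]
          exact ⟨le_refl _, by linarith⟩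
      have hxK : ∀ j, b j ≤ x j ∧ x j < b j + 2 ^ k * ℓ := by
        have := hIK hxI; rw [hK] at this; exact this
      have hfr := mem_frontier_box_high b (2 ^ k * ℓ) hL x hxK i
      rw [← hK] at hfr
      have hg := hgood x hxI _ hfr
      rw [dist_update_aux] at hg
      have hxi : x i = a i + ℓ - ε := by rw [hx]; dsimp only; rw [Function.update_self]
      rw [hxi, abs_of_nonpos (by linarith [(hxK i).2, hxi])] at hg
      linarith [hg, hxi]
    by_contra hcon
    push_neg at hcon
    set c := (2:ℝ) ^ k / 4 * ℓ with hc
    set t := b i + 2 ^ k * ℓ - (a i + ℓ) with ht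
    have hct : 0 < c - t := by linarith
    set ε := min ((c - t) / 2) (ℓ / 2) with hε
    have hε0 : 0 < ε := lt_min (by linarith) (by linarith)
    have hεℓ : ε < ℓ := lt_of_le_of_lt (min_le_right _ _) (by linarith)
    have := key ε hε0 hεℓ
    have h2 : ε ≤ (c - t) / 2 := min_le_left _ _
    have : c ≤ t + ε := by rw [hc, ht] at *; linarith [this]
    linarith
  -- now the inclusion
  intro x hx
  rw [hK]
  intro i
  have hx1 := (hx i).1
  have hx2 := (hx i).2
  have hmℓ : |(m i : ℝ)| * ℓ ≤ 2 ^ k / 4 * ℓ :=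
    mul_le_mul_of_nonneg_right (hmi i) (le_of_lt hℓ)
  have habs1 : -(2 ^ k / 4 * ℓ) ≤ (m i : ℝ) * ℓ := by
    have := neg_abs_le ((m i : ℝ) * ℓ)
    rw [abs_mul, abs_of_pos hℓ] at this
    linarith
  have habs2 : (m i : ℝ) * ℓ ≤ 2 ^ k / 4 * ℓ := by
    have := le_abs_self ((m i : ℝ) * ℓ)
    rw [abs_mul, abs_of_pos hℓ] at this
    linarith
  constructor
  · linarith [hlow i]
  · linarith [hhigh i]
end

section
/- Let 𝒜 be an associative algebra over ℂ with a subspace ℒ¹ and a linear functional τ : ℒ¹ → ℂ. For a Banach subspace X ⊂ 𝒜, define Y(X) = {e ∈ 𝒜 : ex ∈ ℒ¹ for all x ∈ X} with seminorm |e|_{Y(X)} = sup{|τ(ex)| : x ∈ X, |x|_X = 1}, and the map Λ : Y(X) → X*, Λ_y(x) = τ(yx). Call X admissible if (i) Y(X) is a Banach space under |·|_{Y(X)}, (ii) y ↦ Λ_y is surjective onto X*, and (iii) for all x ∈ X, y ∈ Y(X) one has xy ∈ ℒ¹ and τ(xy) = τ(yx). Then: if X is admissible and reflexive and Y(X) is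 also admissible, one has Y(Y(X)) = X as sets and |x|_{Y(Y(X))} = |x|_X for all x ∈ X. -/
noncomputable section
open scoped Classical

/-- The trace `τ : ℒ¹ → ℂ`, extended by junk value `0` outside `ℒ¹`. -/
def tr {𝒜 : Type*} [Ring 𝒜] [Algebra ℂ 𝒜] (L1 : Submodule ℂ 𝒜) (τ : L1 →ₗ[ℂ] ℂ)
    (e : 𝒜) : ℂ :=
  if h : e ∈ L1 then τ ⟨e, h⟩ else 0

lemma tr_add {𝒜 : Type*} [Ring 𝒜] [Algebra ℂ 𝒜] {L1 : Submodule ℂ 𝒜} (τ : L1 →ₗ[ℂ] ℂ)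
    {a b : 𝒜} (ha : a ∈ L1) (hb : b ∈ L1) :
    tr L1 τ (a + b) = tr L1 τ a + tr L1 τ b := by
  unfold tr
  rw [dif_pos ha, dif_pos hb, dif_pos (L1.add_mem ha hb), ← map_add]
  rfl

lemma tr_smul {𝒜 : Type*} [Ring 𝒜] [Algebra ℂ 𝒜] {L1 : Submodule ℂ 𝒜} (τ : L1 →ₗ[ℂ] ℂ)
    {a : 𝒜} (ha : a ∈ L1) (c : ℂ) :
    tr L1 τ (c • a) = c * tr L1 τ a := by
  unfold tr
  rw [dif_pos ha, dif_pos (L1.smul_mem c ha), ← smul_eq_mul, ← map_smul]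
  rfl

/-- The bilinear pairing `(e, f) ↦ tr (ιE e * ιF f)`. -/
def trPair {𝒜 : Type*} [Ring 𝒜] [Algebra ℂ 𝒜] (L1 : Submodule ℂ 𝒜) (τ : L1 →ₗ[ℂ] ℂ)
    {E F : Type*} [AddCommGroup E] [Module ℂ E] [AddCommGroup F] [Module ℂ F]
    (ιE : E →ₗ[ℂ] 𝒜) (ιF : F →ₗ[ℂ] 𝒜) (h : ∀ e f, ιE e * ιF f ∈ L1) :
    E →ₗ[ℂ] F →ₗ[ℂ] ℂ where
  toFun e :=
    { toFun := fun f => tr L1 τ (ιE e * ιF f)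
      map_add' := fun f f' =>
        show tr L1 τ (ιE e * ιF (f + f')) = _ by
          rw [map_add, mul_add, tr_add τ (h e f) (h e f')]
      map_smul' := fun c f =>
        show tr L1 τ (ιE e * ιF (c • f)) = _ by
          rw [map_smul, mul_smul_comm, tr_smul τ (h e f) c]; rfl }
  map_add' e e' := by
    ext f
    simp only [LinearMap.coe_mk, AddHom.coe_mk, LinearMap.add_apply]
    rw [map_add, add_mul, tr_add τ (h e f) (h e' f)]
  map_smul' c e := by
    ext f
    simp only [LinearMap.coe_mk, AddHom.coe_mk, RingHom.id_apply, LinearMap.smul_apply]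
    rw [map_smul, smul_mul_assoc, tr_smul τ (h e f) c]; rfl

@[simp] lemma trPair_apply {𝒜 : Type*} [Ring 𝒜] [Algebra ℂ 𝒜] (L1 : Submodule ℂ 𝒜)
    (τ : L1 →ₗ[ℂ] ℂ) {E F : Type*} [AddCommGroup E] [Module ℂ E] [AddCommGroup F]
    [Module ℂ F] (ιE : E →ₗ[ℂ] 𝒜) (ιF : F →ₗ[ℂ] 𝒜) (h : ∀ e f, ιE e * ιF f ∈ L1)
    (e : E) (f : F) : trPair L1 τ ιE ιF h e f = tr L1 τ (ιE e * ιF f) := rfl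

/-- Generic duality lemma: a bilinear pairing realizing the norm and surjective onto the
dual yields an isometric linear equivalence with the dual. -/
lemma dualIso {Y X : Type*} [NormedAddCommGroup X] [NormedSpace ℂ X]
    [NormedAddCommGroup Y] [NormedSpace ℂ Y]
    (B : Y →ₗ[ℂ] X →ₗ[ℂ] ℂ)
    (hnorm : ∀ y : Y, ‖y‖ = sSup {r : ℝ | ∃ x : X, ‖x‖ = 1 ∧ r = ‖B y x‖})
    (hsurj : ∀ f : StrongDual ℂ X, ∃ y : Y, ∀ x : X, f x = B y x) :
    ∃ Λ : Y ≃ₗ[ℂ] StrongDual ℂ X,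
      (∀ (y : Y) (x : X), Λ y x = B y x) ∧ ∀ y : Y, ‖Λ y‖ = ‖y‖ := by
  have bound : ∀ (y : Y) (x : X), ‖B y x‖ ≤ ‖y‖ * ‖x‖ := by
    intro y x
    by_cases hb : BddAbove {r : ℝ | ∃ x : X, ‖x‖ = 1 ∧ r = ‖B y x‖}
    · rcases eq_or_ne x 0 with rfl | hx
      · simp
      · have hxn : (‖x‖ : ℝ) ≠ 0 := norm_ne_zero_iff.mpr hx
        set u : X := ((‖x‖ : ℂ))⁻¹ • x with hu
        have hun : ‖u‖ = 1 := by
          rw [hu, norm_smul, norm_inv, Complex.norm_real, norm_norm,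
            inv_mul_cancel₀ hxn]
        have hmem : ‖B y u‖ ∈ {r : ℝ | ∃ x : X, ‖x‖ = 1 ∧ r = ‖B y x‖} :=
          ⟨u, hun, rfl⟩
        have h1 : ‖B y u‖ ≤ ‖y‖ := (hnorm y) ▸ le_csSup hb hmem
        have hxu : x = (‖x‖ : ℂ) • u := by
          rw [hu, smul_smul, mul_inv_cancel₀ (by exact_mod_cast hxn), one_smul]
        calc ‖B y x‖ = ‖B y ((‖x‖ : ℂ) • u)‖ := by rw [← hxu]
          _ = ‖x‖ * ‖B y u‖ := by
              rw [map_smul, smul_eq_mul, norm_mul, Complex.norm_real, norm_norm]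
          _ ≤ ‖x‖ * ‖y‖ := by
              exact mul_le_mul_of_nonneg_left h1 (norm_nonneg x)
          _ = ‖y‖ * ‖x‖ := mul_comm _ _
    · have hy0 : ‖y‖ = 0 := by rw [hnorm y, Real.sSup_of_not_bddAbove hb]
      have : y = 0 := norm_eq_zero.mp hy0
      subst this
      simp
  let Λ₀ : Y →ₗ[ℂ] StrongDual ℂ X :=
    { toFun := fun y => (B y).mkContinuous ‖y‖ (bound y)
      map_add' := fun y y' => by
        ext x
        simp [LinearMap.mkContinuous_apply]
      map_smul' := fun c y => by
        ext x
        simp [LinearMap.mkContinuous_apply] }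
  have hval : ∀ (y : Y) (x : X), Λ₀ y x = B y x := fun y x => rfl
  have hΛnorm : ∀ y : Y, ‖Λ₀ y‖ = ‖y‖ := by
    intro y
    refine le_antisymm (LinearMap.mkContinuous_norm_le (B y) (norm_nonneg y) (bound y)) ?_
    rw [hnorm y]
    refine Real.sSup_le ?_ (norm_nonneg _)
    rintro r ⟨x, hx1, rfl⟩
    calc ‖B y x‖ = ‖Λ₀ y x‖ := by rw [hval]
      _ ≤ ‖Λ₀ y‖ * ‖x‖ := (Λ₀ y).le_opNorm x
      _ = ‖Λ₀ y‖ := by rw [hx1, mul_one]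
  have hinj : Function.Injective Λ₀ := by
    intro a b hab
    have : ‖a - b‖ = 0 := by
      rw [← hΛnorm, map_sub, hab, sub_self, norm_zero]
    exact sub_eq_zero.mp (norm_eq_zero.mp this)
  have hsurj' : Function.Surjective Λ₀ := by
    intro f
    obtain ⟨y, hy⟩ := hsurj f
    exact ⟨y, by ext x; rw [hval, ← hy]⟩
  exact ⟨LinearEquiv.ofBijective Λ₀ ⟨hinj, hsurj'⟩, hval, hΛnorm⟩

lemma sSup_dual_eq_norm {X : Type*} [NormedAddCommGroup X] [NormedSpace ℂ X]
    [CompleteSpace X] (x : X) :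
    sSup {r : ℝ | ∃ f : StrongDual ℂ X, ‖f‖ = 1 ∧ r = ‖f x‖} = ‖x‖ := by
  rcases eq_or_ne x 0 with rfl | hx
  · rw [norm_zero]
    refine le_antisymm (Real.sSup_le ?_ le_rfl) (Real.sSup_nonneg ?_) <;>
      · rintro r ⟨f, hf, rfl⟩; simp
  · obtain ⟨g, hg1, hgx⟩ := exists_dual_vector ℂ x (norm_ne_zero_iff.mpr hx)
    have hb : BddAbove {r : ℝ | ∃ f : StrongDual ℂ X, ‖f‖ = 1 ∧ r = ‖f x‖} := by
      refine ⟨‖x‖, ?_⟩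
      rintro r ⟨f, hf, rfl⟩
      calc ‖f x‖ ≤ ‖f‖ * ‖x‖ := f.le_opNorm x
        _ = ‖x‖ := by rw [hf, one_mul]
    refine le_antisymm (Real.sSup_le ?_ (norm_nonneg x)) ?_
    · rintro r ⟨f, hf, rfl⟩
      calc ‖f x‖ ≤ ‖f‖ * ‖x‖ := f.le_opNorm x
        _ = ‖x‖ := by rw [hf, one_mul]
    · refine le_csSup hb ⟨g, hg1, ?_⟩
      rw [hgx]
      simp

/-- Let `𝒜` be an associative algebra over `ℂ` with a subspace `ℒ¹` and a linear trace
`τ : ℒ¹ → ℂ`. A Banach subspace `X ⊆ 𝒜` (realized by an injective linear embedding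
`ι : X → 𝒜`) is admissible when: (i) `Y(X) := {e | e·x ∈ ℒ¹ ∀x ∈ X}` with the seminorm
`|e| = sup{|τ(e·x)| : ‖x‖_X = 1}` is a Banach space (realized here by `Y`, `ιY`);
(ii) `y ↦ τ(y·–)` maps `Y(X)` onto `X*`; (iii) `x·y ∈ ℒ¹` and `τ(x·y) = τ(y·x)` for
`x ∈ X`, `y ∈ Y(X)`. If `X` is admissible and reflexive and `Y(X)` is also admissible
(with `Y(Y(X))` realized by `Z`, `ιZ`), then `Y(Y(X)) = X` as sets and
`|x|_{Y(Y(X))} = |x|_X` for all `x ∈ X`. -/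
theorem stmt14 (𝒜 : Type*) [Ring 𝒜] [Algebra ℂ 𝒜]
    (L1 : Submodule ℂ 𝒜) (τ : L1 →ₗ[ℂ] ℂ)
    -- the admissible Banach subspace X of 𝒜
    (X : Type*) [NormedAddCommGroup X] [NormedSpace ℂ X] [CompleteSpace X]
    (ι : X →ₗ[ℂ] 𝒜) (hι : Function.Injective ι)
    -- (i) for X : Y(X) is a Banach space under the seminorm |·|_{Y(X)}; it is realized
    -- by the Banach space Y via the embedding ιY, with the correct carrier set and norm
    (Y : Type*) [NormedAddCommGroup Y] [NormedSpace ℂ Y] [CompleteSpace Y]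
    (ιY : Y →ₗ[ℂ] 𝒜) (hιY : Function.Injective ιY)
    (hYset : Set.range ιY = {e : 𝒜 | ∀ x : X, e * ι x ∈ L1})
    (hYnorm : ∀ y : Y,
      ‖y‖ = sSup {r : ℝ | ∃ x : X, ‖x‖ = 1 ∧ r = ‖tr L1 τ (ιY y * ι x)‖})
    -- (ii) for X : y ↦ Λ_y is surjective onto X*
    (hXsurj : ∀ f : StrongDual ℂ X, ∃ y : Y, ∀ x : X, f x = tr L1 τ (ιY y * ι x))
    -- (iii) for X
    (hXcomm : ∀ (x : X) (y : Y),
      ι x * ιY y ∈ L1 ∧ tr L1 τ (ι x * ιY y) = tr L1 τ (ιY y * ι x))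
    -- X is reflexive
    (hrefl : Function.Surjective (NormedSpace.inclusionInDoubleDual ℂ X))
    -- Y(X) is also admissible: (i) for Y, realized by the Banach space Z
    (Z : Type*) [NormedAddCommGroup Z] [NormedSpace ℂ Z] [CompleteSpace Z]
    (ιZ : Z →ₗ[ℂ] 𝒜) (hιZ : Function.Injective ιZ)
    (hZset : Set.range ιZ = {e : 𝒜 | ∀ y : Y, e * ιY y ∈ L1})
    (hZnorm : ∀ z : Z,
      ‖z‖ = sSup {r : ℝ | ∃ y : Y, ‖y‖ = 1 ∧ r = ‖tr L1 τ (ιZ z * ιY y)‖})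
    -- (ii) for Y
    (hYsurj : ∀ g : StrongDual ℂ Y, ∃ z : Z, ∀ y : Y, g y = tr L1 τ (ιZ z * ιY y))
    -- (iii) for Y
    (hYcomm : ∀ (y : Y) (z : Z),
      ιY y * ιZ z ∈ L1 ∧ tr L1 τ (ιY y * ιZ z) = tr L1 τ (ιZ z * ιY y)) :
    {e : 𝒜 | ∀ y : Y, e * ιY y ∈ L1} = Set.range ι ∧
      ∀ x : X,
        sSup {r : ℝ | ∃ y : Y, ‖y‖ = 1 ∧ r = ‖tr L1 τ (ι x * ιY y)‖} = ‖x‖ := by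
  have hmemYX : ∀ (y : Y) (x : X), ιY y * ι x ∈ L1 := by
    intro y x
    have h1 : ιY y ∈ Set.range ιY := ⟨y, rfl⟩
    rw [hYset] at h1
    exact h1 x
  have hmemZY : ∀ (z : Z) (y : Y), ιZ z * ιY y ∈ L1 := by
    intro z y
    have h1 : ιZ z ∈ Set.range ιZ := ⟨z, rfl⟩
    rw [hZset] at h1
    exact h1 y
  obtain ⟨Λ, hΛval, hΛnorm⟩ := dualIso (trPair L1 τ ιY ι hmemYX)
    (by
      intro y
      simp only [trPair_apply]
      exact hYnorm y)
    (fun f => hXsurj f)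
  obtain ⟨M, hMval, hMnorm⟩ := dualIso (trPair L1 τ ιZ ιY hmemZY)
    (by
      intro z
      simp only [trPair_apply]
      exact hZnorm z)
    (fun g => hYsurj g)
  constructor
  · ext e
    simp only [Set.mem_setOf_eq, Set.mem_range]
    constructor
    · intro he
      have he' : e ∈ Set.range ιZ := by rw [hZset]; exact he
      obtain ⟨z, rfl⟩ := he'
      -- the functional on Y given by z
      set g : StrongDual ℂ Y := M z with hg
      -- Λ⁻¹ as a continuous linear map
      have hSnorm : ∀ f : StrongDual ℂ X, ‖(Λ.symm f : Y)‖ ≤ 1 * ‖f‖ := by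
        intro f
        rw [← hΛnorm (Λ.symm f), Λ.apply_symm_apply, one_mul]
      set Scont : StrongDual ℂ X →L[ℂ] Y :=
        LinearMap.mkContinuous (Λ.symm : StrongDual ℂ X →ₗ[ℂ] Y) 1 hSnorm with hS
      set F : StrongDual ℂ (StrongDual ℂ X) := g.comp Scont with hF
      obtain ⟨x, hxF⟩ := hrefl F
      have key : ∀ y : Y, tr L1 τ (ιY y * ι x) = tr L1 τ (ιZ z * ιY y) := by
        intro y
        have h1 : F (Λ y) = g y := by
          rw [hF]
          simp only [ContinuousLinearMap.comp_apply]
          congr 1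
          show (Λ.symm (Λ y) : Y) = y
          exact Λ.symm_apply_apply y
        have h2 : F (Λ y) = (Λ y) x := by
          rw [← hxF]
          rfl
        have h3 : (Λ y) x = tr L1 τ (ιY y * ι x) := hΛval y x
        have h4 : g y = tr L1 τ (ιZ z * ιY y) := hMval z y
        rw [← h3, ← h2, h1, h4]
      have hx' : ι x ∈ Set.range ιZ := by
        rw [hZset]; exact fun y => (hXcomm x y).1
      obtain ⟨z', hz'⟩ := hx'
      have hzz : z' = z := by
        apply M.injective
        ext y
        rw [hMval z' y, hMval z y]
        show tr L1 τ (ιZ z' * ιY y) = tr L1 τ (ιZ z * ιY y)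
        rw [hz', (hXcomm x y).2, key y]
      exact ⟨x, by rw [← hz', hzz]⟩
    · rintro ⟨x, rfl⟩ y
      exact (hXcomm x y).1
  · intro x
    have hset : {r : ℝ | ∃ y : Y, ‖y‖ = 1 ∧ r = ‖tr L1 τ (ι x * ιY y)‖} =
        {r : ℝ | ∃ f : StrongDual ℂ X, ‖f‖ = 1 ∧ r = ‖f x‖} := by
      ext r
      simp only [Set.mem_setOf_eq]
      constructor
      · rintro ⟨y, hy1, rfl⟩
        refine ⟨Λ y, by rw [hΛnorm, hy1], ?_⟩
        rw [hΛval y x]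
        show ‖tr L1 τ (ι x * ιY y)‖ = ‖tr L1 τ (ιY y * ι x)‖
        rw [(hXcomm x y).2]
      · rintro ⟨f, hf1, rfl⟩
        refine ⟨Λ.symm f, by rw [← hΛnorm (Λ.symm f), Λ.apply_symm_apply]; exact hf1, ?_⟩
        have h5 : (Λ (Λ.symm f)) x = tr L1 τ (ιY (Λ.symm f) * ι x) := hΛval _ x
        rw [Λ.apply_symm_apply] at h5
        rw [h5, (hXcomm x (Λ.symm f)).2]
    rw [hset, sSup_dual_eq_norm]
end
end
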